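/- For independent random variables X₁, X₂ each distributed Gamma(p) with p > 0 and rate 1, E[(X₁ - X₂)^{2n}] = Γ(n+p) · (2n)! / (Γ(n+1) · Γ(p)) for all natural numbers n ≥ 1. -/

import Mathlib

open MeasureTheory ProbabilityTheory Real
open Finset
open scoped ENNReal NNReal

noncomputable def gA (p : ℝ) (k : ℕ) : ℝ := Real.Gamma (p + k) / (Real.Gamma p * k.factorial)
noncomputable def gB (p : ℝ) (k : ℕ) : ℝ := (-1) ^ k * gA p k
noncomputable def gC (p : ℝ) (m : ℕ) : ℝ := ∑ k ∈ range (m + 1), gA p k * gB p (m - k)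

lemma gA_zero (p : ℝ) (hp : Real.Gamma p ≠ 0) : gA p 0 = 1 := by
  simp [gA, div_self, mul_one, hp]

lemma gA_rec (p : ℝ) (hp : 0 < p) (k : ℕ) :
    ((k : ℝ) + 1) * gA p (k + 1) = (p + k) * gA p k := by
  have h1 : Real.Gamma (p + (k + 1 : ℕ)) = (p + k) * Real.Gamma (p + k) := by
    push_cast
    rw [show p + ((k : ℝ) + 1) = (p + k) + 1 by ring,
      Real.Gamma_add_one (by positivity)]
  have h2 : ((k + 1 : ℕ).factorial : ℝ) = ((k : ℝ) + 1) * k.factorial := by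
    push_cast [Nat.factorial_succ]; ring
  have h3 : Real.Gamma p * ((k + 1 : ℕ).factorial : ℝ) ≠ 0 := by
    have := Real.Gamma_pos_of_pos hp; positivity
  rw [gA, gA, h1, h2]
  field_simp

lemma gB_rec (p : ℝ) (hp : 0 < p) (k : ℕ) :
    ((k : ℝ) + 1) * gB p (k + 1) = -((p + k) * gB p k) := by
  have h := gA_rec p hp k
  calc ((k : ℝ) + 1) * gB p (k + 1) = (-1) ^ (k+1) * (((k : ℝ) + 1) * gA p (k + 1)) := by
        rw [gB]; ring
    _ = (-1) ^ (k+1) * ((p + k) * gA p k) := by rw [h]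
    _ = -((p + k) * gB p k) := by rw [gB]; ring

lemma stepA (p : ℝ) (hp : 0 < p) (M : ℕ) :
    ∑ k ∈ range (M + 2), (k : ℝ) * (gA p k * gB p (M + 1 - k))
      = ∑ k ∈ range (M + 1), (p + k) * (gA p k * gB p (M - k)) := by
  rw [Finset.sum_range_succ']
  simp only [Nat.cast_zero, zero_mul, add_zero]
  refine Finset.sum_congr rfl fun i hi => ?_
  have h1 : M + 1 - (i + 1) = M - i := by omega
  rw [h1]
  push_cast
  calc ((i : ℝ) + 1) * (gA p (i + 1) * gB p (M - i))
      = (((i : ℝ) + 1) * gA p (i + 1)) * gB p (M - i) := by ring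
    _ = ((p + i) * gA p i) * gB p (M - i) := by rw [gA_rec p hp i]
    _ = (p + i) * (gA p i * gB p (M - i)) := by ring

lemma stepB (p : ℝ) (hp : 0 < p) (M : ℕ) :
    ∑ k ∈ range (M + 2), ((M + 1 - k : ℕ) : ℝ) * (gA p k * gB p (M + 1 - k))
      = ∑ k ∈ range (M + 1), (-(p + ((M - k : ℕ) : ℝ))) * (gA p k * gB p (M - k)) := by
  rw [← Finset.sum_range_reflect (fun k => ((M + 1 - k : ℕ) : ℝ) * (gA p k * gB p (M + 1 - k))) (M + 2),
      ← Finset.sum_range_reflect (fun k => (-(p + ((M - k : ℕ) : ℝ))) * (gA p k * gB p (M - k))) (M + 1)]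
  rw [Finset.sum_range_succ']
  have h0 : ((M + 1 - (M + 2 - 1 - 0) : ℕ) : ℝ) * (gA p (M + 2 - 1 - 0) * gB p (M + 1 - (M + 2 - 1 - 0))) = 0 := by
    have : M + 1 - (M + 2 - 1 - 0) = 0 := by omega
    rw [this]
    norm_num
  rw [h0, add_zero]
  refine Finset.sum_congr rfl fun i hi => ?_
  rw [Finset.mem_range] at hi
  have e1 : M + 2 - 1 - (i + 1) = M - i := by omega
  have e2 : M + 1 - (M - i) = i + 1 := by omega
  have e3 : M + 1 - 1 - i = M - i := by omega
  have e4 : M - (M - i) = i := by omega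
  rw [e1, e2, e3, e4]
  push_cast
  calc ((i : ℝ) + 1) * (gA p (M - i) * gB p (i + 1))
      = (((i : ℝ) + 1) * gB p (i + 1)) * gA p (M - i) := by ring
    _ = (-((p + i) * gB p i)) * gA p (M - i) := by rw [gB_rec p hp i]
    _ = -(p + (i : ℝ)) * (gA p (M - i) * gB p i) := by ring

lemma gC_rec (p : ℝ) (hp : 0 < p) (m : ℕ) :
    ((m : ℝ) + 2) * gC p (m + 2) = (2 * p + m) * gC p m := by
  have hA1 := stepA p hp (m + 1)
  have hB1 := stepB p hp (m + 1)
  have hA0 := stepA p hp m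
  have hB0 := stepB p hp m
  have e1 : ((m : ℝ) + 2) * gC p (m + 2)
      = (∑ k ∈ range (m + 1 + 2), (k : ℝ) * (gA p k * gB p (m + 1 + 1 - k)))
        + ∑ k ∈ range (m + 1 + 2), ((m + 1 + 1 - k : ℕ) : ℝ) * (gA p k * gB p (m + 1 + 1 - k)) := by
    rw [gC, Finset.mul_sum, ← Finset.sum_add_distrib]
    refine Finset.sum_congr rfl fun k hk => ?_
    rw [Finset.mem_range] at hk
    have : ((m + 1 + 1 - k : ℕ) : ℝ) = (m : ℝ) + 2 - k := by
      push_cast [Nat.cast_sub (by omega : k ≤ m + 1 + 1)]; ring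
    rw [this]; ring
  have e2 : (∑ k ∈ range (m + 2), (p + (k : ℝ)) * (gA p k * gB p (m + 1 - k)))
        + ∑ k ∈ range (m + 2), (-(p + ((m + 1 - k : ℕ) : ℝ))) * (gA p k * gB p (m + 1 - k))
      = (∑ k ∈ range (m + 2), (k : ℝ) * (gA p k * gB p (m + 1 - k)))
        - ∑ k ∈ range (m + 2), ((m + 1 - k : ℕ) : ℝ) * (gA p k * gB p (m + 1 - k)) := by
    rw [← Finset.sum_add_distrib, ← Finset.sum_sub_distrib]
    refine Finset.sum_congr rfl fun k hk => ?_
    rw [Finset.mem_range] at hk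
    have : ((m + 1 - k : ℕ) : ℝ) = (m : ℝ) + 1 - k := by
      push_cast [Nat.cast_sub (by omega : k ≤ m + 1)]; ring
    rw [this]; ring
  have e3 : (∑ k ∈ range (m + 1), (p + (k : ℝ)) * (gA p k * gB p (m - k)))
        - ∑ k ∈ range (m + 1), (-(p + ((m - k : ℕ) : ℝ))) * (gA p k * gB p (m - k))
      = (2 * p + m) * gC p m := by
    rw [gC, Finset.mul_sum, ← Finset.sum_sub_distrib]
    refine Finset.sum_congr rfl fun k hk => ?_
    rw [Finset.mem_range] at hk
    have : ((m - k : ℕ) : ℝ) = (m : ℝ) - k := by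
      push_cast [Nat.cast_sub (by omega : k ≤ m)]; ring
    rw [this]; ring
  rw [e1, hA1, hB1, e2, hA0, hB0, e3]

lemma gC_even (p : ℝ) (hp : 0 < p) : ∀ n : ℕ, gC p (2 * n) = gA p n := by
  intro n
  induction n with
  | zero =>
      simp only [Nat.mul_zero, gC, Finset.range_one, Finset.sum_singleton, gB, pow_zero, one_mul,
        Nat.sub_self]
      rw [gA_zero p (Real.Gamma_pos_of_pos hp).ne']
      norm_num [gA_zero p (Real.Gamma_pos_of_pos hp).ne']
  | succ n ih =>
      have h := gC_rec p hp (2 * n)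
      have h2 := gA_rec p hp n
      have hne : ((2 * n : ℕ) : ℝ) + 2 ≠ 0 := by positivity
      have hmul : (((2 * n : ℕ) : ℝ) + 2) * gC p (2 * n + 2)
          = (((2 * n : ℕ) : ℝ) + 2) * gA p (n + 1) := by
        rw [h, ih]
        push_cast
        push_cast at h2
        linear_combination (-2 : ℝ) * h2
      have := mul_left_cancel₀ hne hmul
      have hidx : 2 * (n + 1) = 2 * n + 2 := by ring
      rw [hidx, this]

lemma comb_main (p : ℝ) (hp : 0 < p) (n : ℕ) :
    ∑ k ∈ range (2 * n + 1), (-1 : ℝ) ^ (k + 2 * n) * (Real.Gamma (p + k) / Real.Gamma p)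
        * (Real.Gamma (p + ((2 * n - k : ℕ) : ℝ)) / Real.Gamma p) * ((2 * n).choose k)
      = Real.Gamma ((n : ℝ) + p) * ((2 * n).factorial : ℝ)
        / (Real.Gamma ((n : ℝ) + 1) * Real.Gamma p) := by
  have hGp := Real.Gamma_pos_of_pos hp
  have hrhs : Real.Gamma ((n : ℝ) + p) * ((2 * n).factorial : ℝ)
        / (Real.Gamma ((n : ℝ) + 1) * Real.Gamma p)
      = ((2 * n).factorial : ℝ) * gC p (2 * n) := by
    rw [gC_even p hp n, gA, Real.Gamma_nat_eq_factorial, add_comm (n : ℝ) p]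
    field_simp
  rw [hrhs, gC, Finset.mul_sum]
  refine Finset.sum_congr rfl fun k hk => ?_
  rw [Finset.mem_range] at hk
  have hkle : k ≤ 2 * n := by omega
  have hsign : (-1 : ℝ) ^ (k + 2 * n) = (-1) ^ (2 * n - k) := by
    rw [show k + 2 * n = (2 * n - k) + 2 * k by omega, pow_add, pow_mul]
    norm_num
  have hch : (((2 * n).choose k : ℕ) : ℝ) * (k.factorial : ℝ) * (((2 * n - k).factorial : ℕ) : ℝ)
      = ((2 * n).factorial : ℝ) := by
    exact_mod_cast congrArg (Nat.cast (R := ℝ)) (Nat.choose_mul_factorial_mul_factorial hkle)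
  rw [hsign]; simp only [gB, gA]
  have hf1 : (k.factorial : ℝ) ≠ 0 := by exact_mod_cast k.factorial_ne_zero
  have hf2 : ((2 * n - k).factorial : ℝ) ≠ 0 := by exact_mod_cast (2 * n - k).factorial_ne_zero
  have hcast : ((2 * n - k : ℕ) : ℝ) = 2 * (n : ℝ) - k := by
    push_cast [Nat.cast_sub hkle]; ring
  rw [hcast]
  field_simp
  linear_combination (Real.Gamma (p + (2 * (n : ℝ) - k))) * hch

open MeasureTheory ProbabilityTheory Real
open scoped ENNReal NNReal

lemma gamma_pdf_ae (p : ℝ) (hp : 0 < p) (k : ℕ) :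
    (fun x : ℝ => gammaPDFReal p 1 x * x ^ k)
      =ᵐ[volume] (Set.Ioi (0 : ℝ)).indicator
        (fun x => (Real.Gamma p)⁻¹ * (Real.exp (-x) * x ^ (p + k - 1))) := by
  have h0 : ∀ᵐ x : ℝ, x ≠ 0 := by
    rw [MeasureTheory.ae_iff]
    have : {x : ℝ | ¬x ≠ 0} = {0} := by ext x; simp
    rw [this]
    exact measure_singleton 0
  filter_upwards [h0] with x hx
  rcases hx.lt_or_gt with hneg | hpos
  · rw [Set.indicator_of_notMem (by simpa using hneg.le)]
    simp [gammaPDFReal, not_le.mpr hneg]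
  · rw [Set.indicator_of_mem (Set.mem_Ioi.mpr hpos)]
    have hxx : x ^ (p - 1) * x ^ ((k : ℕ) : ℝ) = x ^ (p + (k : ℝ) - 1) := by
      rw [← Real.rpow_add hpos]; ring_nf
    rw [gammaPDFReal, if_pos hpos.le, Real.one_rpow]
    simp only [one_mul]
    rw [← Real.rpow_natCast x k, ← hxx]
    ring

lemma gamma_pdf_int (p : ℝ) (hp : 0 < p) (k : ℕ) :
    Integrable ((Set.Ioi (0 : ℝ)).indicator
      (fun x => (Real.Gamma p)⁻¹ * (Real.exp (-x) * x ^ (p + k - 1)))) volume := by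
  rw [integrable_indicator_iff measurableSet_Ioi]
  exact (Real.GammaIntegral_convergent (by positivity : (0:ℝ) < p + k)).const_mul _

lemma gamma_pdf_int_val (p : ℝ) (hp : 0 < p) (k : ℕ) :
    ∫ x, (Set.Ioi (0 : ℝ)).indicator
      (fun x => (Real.Gamma p)⁻¹ * (Real.exp (-x) * x ^ (p + k - 1))) x
      = Real.Gamma (p + k) / Real.Gamma p := by
  rw [integral_indicator measurableSet_Ioi, MeasureTheory.integral_const_mul,
    ← Real.Gamma_eq_integral (by positivity : (0:ℝ) < p + k)]
  rw [inv_mul_eq_div]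

lemma gammaMeasure_eq (p : ℝ) :
    gammaMeasure p 1
      = (volume : Measure ℝ).withDensity
          (fun x => ((gammaPDFReal p 1 x).toNNReal : ℝ≥0∞)) := rfl

lemma gamma_smul_eq (p : ℝ) (hp : 0 < p) (k : ℕ) :
    (fun x : ℝ => ((gammaPDFReal p 1 x).toNNReal : ℝ≥0) • x ^ k)
      = fun x : ℝ => gammaPDFReal p 1 x * x ^ k := by
  funext x
  rw [NNReal.smul_def, Real.coe_toNNReal _ (gammaPDFReal_nonneg hp one_pos x), smul_eq_mul]

lemma gamma_moment_integrable (p : ℝ) (hp : 0 < p) (k : ℕ) :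
    Integrable (fun x : ℝ => x ^ k) (gammaMeasure p 1) := by
  rw [gammaMeasure_eq,
    integrable_withDensity_iff_integrable_smul ((measurable_gammaPDFReal p 1).real_toNNReal)]
  rw [gamma_smul_eq p hp k]
  exact (gamma_pdf_int p hp k).congr (gamma_pdf_ae p hp k).symm

lemma gamma_moment (p : ℝ) (hp : 0 < p) (k : ℕ) :
    ∫ x, x ^ k ∂(gammaMeasure p 1) = Real.Gamma (p + k) / Real.Gamma p := by
  rw [gammaMeasure_eq,
    integral_withDensity_eq_integral_smul ((measurable_gammaPDFReal p 1).real_toNNReal)]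
  calc ∫ x : ℝ, ((gammaPDFReal p 1 x).toNNReal : ℝ≥0) • x ^ k
      = ∫ x : ℝ, gammaPDFReal p 1 x * x ^ k := by rw [gamma_smul_eq p hp k]
    _ = ∫ x, (Set.Ioi (0 : ℝ)).indicator
          (fun x => (Real.Gamma p)⁻¹ * (Real.exp (-x) * x ^ (p + k - 1))) x :=
        integral_congr_ae (gamma_pdf_ae p hp k)
    _ = Real.Gamma (p + k) / Real.Gamma p := gamma_pdf_int_val p hp k


theorem stmt13 {Ω : Type*} [MeasureSpace Ω] (μ : Measure Ω) [IsProbabilityMeasure μ]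
    (p : ℝ) (hp : 0 < p) (X₁ X₂ : Ω → ℝ)
    (h₁ : Measure.map X₁ μ = gammaMeasure p 1)
    (h₂ : Measure.map X₂ μ = gammaMeasure p 1)
    (hind : IndepFun X₁ X₂ μ)
    (hm₁ : Measurable X₁) (hm₂ : Measurable X₂)
    (n : ℕ) (hn : 1 ≤ n) :
    ∫ ω, (X₁ ω - X₂ ω) ^ (2 * n) ∂μ
      = Real.Gamma (n + p) * (Nat.factorial (2 * n)) / (Real.Gamma (n + 1) * Real.Gamma p) := by
  have hgmeas : ∀ k : ℕ, AEStronglyMeasurable (fun x : ℝ => x ^ k) (gammaMeasure p 1) :=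
    fun k => (measurable_id.pow_const k).aestronglyMeasurable
  have hint1 : ∀ k : ℕ, Integrable (fun ω => X₁ ω ^ k) μ := by
    intro k
    have h := (integrable_map_measure (by rw [h₁]; exact hgmeas k) hm₁.aemeasurable
      (f := X₁) (g := fun x : ℝ => x ^ k)).mp
    exact h (by rw [h₁]; exact gamma_moment_integrable p hp k)
  have hint2 : ∀ k : ℕ, Integrable (fun ω => X₂ ω ^ k) μ := by
    intro k
    have h := (integrable_map_measure (by rw [h₂]; exact hgmeas k) hm₂.aemeasurable
      (f := X₂) (g := fun x : ℝ => x ^ k)).mp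
    exact h (by rw [h₂]; exact gamma_moment_integrable p hp k)
  have hval1 : ∀ k : ℕ, ∫ ω, X₁ ω ^ k ∂μ = Real.Gamma (p + k) / Real.Gamma p := by
    intro k
    rw [← gamma_moment p hp k, ← h₁,
      integral_map hm₁.aemeasurable (by rw [h₁]; exact hgmeas k)]
  have hval2 : ∀ k : ℕ, ∫ ω, X₂ ω ^ k ∂μ = Real.Gamma (p + k) / Real.Gamma p := by
    intro k
    rw [← gamma_moment p hp k, ← h₂,
      integral_map hm₂.aemeasurable (by rw [h₂]; exact hgmeas k)]
  have hindk : ∀ k j : ℕ, IndepFun (fun ω => X₁ ω ^ k) (fun ω => X₂ ω ^ j) μ :=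
    fun k j => hind.comp (measurable_id.pow_const k) (measurable_id.pow_const j)
  have hmulint : ∀ k j : ℕ, Integrable (fun ω => X₁ ω ^ k * X₂ ω ^ j) μ :=
    fun k j => (hindk k j).integrable_mul (hint1 k) (hint2 j)
  have hmulval : ∀ k j : ℕ, ∫ ω, X₁ ω ^ k * X₂ ω ^ j ∂μ
      = (Real.Gamma (p + k) / Real.Gamma p) * (Real.Gamma (p + j) / Real.Gamma p) := by
    intro k j
    rw [← hval1 k, ← hval2 j]
    exact (hindk k j).integral_fun_mul_eq_mul_integral (hint1 k).aestronglyMeasurable (hint2 j).aestronglyMeasurable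
  have expand : ∀ ω, (X₁ ω - X₂ ω) ^ (2 * n)
      = ∑ k ∈ range (2 * n + 1),
          ((-1 : ℝ) ^ (k + 2 * n) * ((2 * n).choose k : ℝ)) * (X₁ ω ^ k * X₂ ω ^ (2 * n - k)) := by
    intro ω
    rw [sub_pow]
    exact Finset.sum_congr rfl fun k hk => by ring
  calc ∫ ω, (X₁ ω - X₂ ω) ^ (2 * n) ∂μ
      = ∫ ω, ∑ k ∈ range (2 * n + 1),
          ((-1 : ℝ) ^ (k + 2 * n) * ((2 * n).choose k : ℝ))
            * (X₁ ω ^ k * X₂ ω ^ (2 * n - k)) ∂μ := by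
        simp_rw [expand]
    _ = ∑ k ∈ range (2 * n + 1), ∫ ω,
          ((-1 : ℝ) ^ (k + 2 * n) * ((2 * n).choose k : ℝ))
            * (X₁ ω ^ k * X₂ ω ^ (2 * n - k)) ∂μ := by
        refine integral_finset_sum _ fun k _ => ?_
        exact (hmulint k (2 * n - k)).const_mul _
    _ = ∑ k ∈ range (2 * n + 1), (-1 : ℝ) ^ (k + 2 * n)
          * (Real.Gamma (p + k) / Real.Gamma p)
          * (Real.Gamma (p + ((2 * n - k : ℕ) : ℝ)) / Real.Gamma p) * ((2 * n).choose k) := by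
        refine Finset.sum_congr rfl fun k _ => ?_
        rw [MeasureTheory.integral_const_mul, hmulval k (2 * n - k)]
        ring
    _ = Real.Gamma ((n : ℝ) + p) * ((2 * n).factorial : ℝ)
          / (Real.Gamma ((n : ℝ) + 1) * Real.Gamma p) := comb_main p hp n
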